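/- arXiv:2209.04552 — 2 statements merged into one kernel-verified Lean document; each statement's English description precedes it below -/
import Mathlib

section
/- Let G be any graph obtained from the complete bipartite graph K_{2,3} by applying a finite sequence of 2-leaf support vertex additions. Then G has maximum degree 3 and satisfies Z(G) = β(G) + 1; that is, every graph in this family attains equality in the bound Z(G) ≤ β(G) + 1 for connected graphs with maximum degree 3. -/
open SimpleGraph

namespace ZFPaper

variable {V : Type*} {W : Type*}

/-- The degree of a vertex, as the cardinality of its neighbor set. -/
noncomputable def degSet (G : SimpleGraph V) (v : V) : ℕ := (G.neighborSet v).ncard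

/-- The maximum degree of a graph. -/
noncomputable def maxDeg (G : SimpleGraph V) : ℕ := sSup {d : ℕ | ∃ v, degSet G v = d}

/-- The minimum degree of a graph. -/
noncomputable def minDeg (G : SimpleGraph V) : ℕ := sInf {d : ℕ | ∃ v, degSet G v = d}

/-- A set of vertices is a vertex cover if every edge has an endpoint in it. -/
def IsVC (G : SimpleGraph V) (C : Set V) : Prop :=
  ∀ ⦃u w : V⦄, G.Adj u w → u ∈ C ∨ w ∈ C

/-- The vertex cover number β(G). -/
noncomputable def vcNum (G : SimpleGraph V) : ℕ :=
  sInf {m : ℕ | ∃ C : Set V, IsVC G C ∧ C.ncard = m}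

/-- A set of vertices is independent if its vertices are pairwise non-adjacent. -/
def IsIndep (G : SimpleGraph V) (S : Set V) : Prop :=
  ∀ ⦃u : V⦄, u ∈ S → ∀ ⦃w : V⦄, w ∈ S → ¬ G.Adj u w

/-- The independence number α(G). -/
noncomputable def indepNum (G : SimpleGraph V) : ℕ :=
  sSup {m : ℕ | ∃ S : Set V, IsIndep G S ∧ S.ncard = m}

/-- `Forced G B v` means that, starting from the blue set `B`, the vertex `v` is
eventually colored blue by the zero forcing process: a blue vertex with a unique
white neighbor forces that neighbor to become blue. -/
inductive Forced (G : SimpleGraph V) (B : Set V) : V → Prop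
  | init : ∀ v ∈ B, Forced G B v
  | force : ∀ u w : V, Forced G B u → G.Adj u w →
      (∀ x : V, G.Adj u x → x ≠ w → Forced G B x) → Forced G B w

/-- A zero forcing set: iterating the forcing process colors every vertex blue. -/
def IsZFS (G : SimpleGraph V) (B : Set V) : Prop := ∀ v : V, Forced G B v

/-- The zero forcing number Z(G). -/
noncomputable def zfNum (G : SimpleGraph V) : ℕ :=
  sInf {m : ℕ | ∃ B : Set V, IsZFS G B ∧ B.ncard = m}

/-- A graph is claw-free if it has no induced `K_{1,3}`. -/
def ClawFree (G : SimpleGraph V) : Prop :=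
  ¬ ∃ (v a b c : V), G.Adj v a ∧ G.Adj v b ∧ G.Adj v c ∧
      a ≠ b ∧ a ≠ c ∧ b ≠ c ∧ ¬ G.Adj a b ∧ ¬ G.Adj a c ∧ ¬ G.Adj b c

/-- The join `G ∨ H` of two graphs: disjoint union plus all edges between the parts. -/
def joinG (G : SimpleGraph V) (H : SimpleGraph W) : SimpleGraph (V ⊕ W) where
  Adj a b :=
    (∃ u v, a = Sum.inl u ∧ b = Sum.inl v ∧ G.Adj u v) ∨
    (∃ u v, a = Sum.inr u ∧ b = Sum.inr v ∧ H.Adj u v) ∨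
    (∃ u v, a = Sum.inl u ∧ b = Sum.inr v) ∨
    (∃ u v, a = Sum.inr u ∧ b = Sum.inl v)
  symm := by
    constructor
    rintro a b (⟨u, v, rfl, rfl, h⟩ | ⟨u, v, rfl, rfl, h⟩ | ⟨u, v, rfl, rfl⟩ | ⟨u, v, rfl, rfl⟩)
    · exact Or.inl ⟨v, u, rfl, rfl, h.symm⟩
    · exact Or.inr (Or.inl ⟨v, u, rfl, rfl, h.symm⟩)
    · exact Or.inr (Or.inr (Or.inr ⟨v, u, rfl, rfl⟩))
    · exact Or.inr (Or.inr (Or.inl ⟨v, u, rfl, rfl⟩))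
  loopless := by
    constructor
    rintro a (⟨u, v, rfl, h, hadj⟩ | ⟨u, v, rfl, h, hadj⟩ | ⟨u, v, rfl, h⟩ | ⟨u, v, rfl, h⟩) <;>
      simp_all

/-- The graph obtained from `G` by a `k`-leaf support vertex addition at `v`:
a new support vertex `w = Sum.inr none` is attached to `v`, and `k` new leaves
`Sum.inr (some i)` are attached to `w`. -/
def lsva (G : SimpleGraph V) (v : V) (k : ℕ) : SimpleGraph (V ⊕ Option (Fin k)) where
  Adj a b :=
    (∃ x y, a = Sum.inl x ∧ b = Sum.inl y ∧ G.Adj x y) ∨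
    (a = Sum.inl v ∧ b = Sum.inr none) ∨
    (a = Sum.inr none ∧ b = Sum.inl v) ∨
    (∃ i : Fin k, a = Sum.inr none ∧ b = Sum.inr (some i)) ∨
    (∃ i : Fin k, a = Sum.inr (some i) ∧ b = Sum.inr none)
  symm := by
    constructor
    rintro a b (⟨x, y, rfl, rfl, h⟩ | ⟨rfl, rfl⟩ | ⟨rfl, rfl⟩ | ⟨i, rfl, rfl⟩ | ⟨i, rfl, rfl⟩)
    · exact Or.inl ⟨y, x, rfl, rfl, h.symm⟩
    · exact Or.inr (Or.inr (Or.inl ⟨rfl, rfl⟩))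
    · exact Or.inr (Or.inl ⟨rfl, rfl⟩)
    · exact Or.inr (Or.inr (Or.inr (Or.inr ⟨i, rfl, rfl⟩)))
    · exact Or.inr (Or.inr (Or.inr (Or.inl ⟨i, rfl, rfl⟩)))
  loopless := by
    constructor
    rintro a (⟨x, y, rfl, h, hadj⟩ | ⟨rfl, h⟩ | ⟨rfl, h⟩ | ⟨i, rfl, h⟩ | ⟨i, rfl, h⟩) <;> simp_all

/-- `LSVAChain m G H` means `H` is obtained from `G` by a finite sequence of
`m`-leaf support vertex additions (each applied at a vertex of degree at most `m-1`). -/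
inductive LSVAChain (m : ℕ) : {α : Type} → SimpleGraph α → {β : Type} → SimpleGraph β → Prop
  | refl {α : Type} (G : SimpleGraph α) : LSVAChain m G G
  | step {α : Type} {G : SimpleGraph α} {β : Type} {H : SimpleGraph β} (v : β)
      (hv : (H.neighborSet v).ncard ≤ m - 1) :
      LSVAChain m G H → LSVAChain m G (lsva H v m)

/-- The graph obtained from the complete graph `K_n` by attaching one pendant
vertex to each vertex in the set `A`. -/
def pendantKn (n : ℕ) (A : Finset (Fin n)) : SimpleGraph (Fin n ⊕ {a : Fin n // a ∈ A}) where
  Adj a b :=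
    (∃ x y : Fin n, a = Sum.inl x ∧ b = Sum.inl y ∧ x ≠ y) ∨
    (∃ p : {a : Fin n // a ∈ A}, a = Sum.inl p.1 ∧ b = Sum.inr p) ∨
    (∃ p : {a : Fin n // a ∈ A}, a = Sum.inr p ∧ b = Sum.inl p.1)
  symm := by
    constructor
    rintro a b (⟨x, y, rfl, rfl, h⟩ | ⟨p, rfl, rfl⟩ | ⟨p, rfl, rfl⟩)
    · exact Or.inl ⟨y, x, rfl, rfl, h.symm⟩
    · exact Or.inr (Or.inr ⟨p, rfl, rfl⟩)
    · exact Or.inr (Or.inl ⟨p, rfl, rfl⟩)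
  loopless := by
    constructor
    rintro a (⟨x, y, rfl, h, hne⟩ | ⟨p, rfl, h⟩ | ⟨p, rfl, h⟩) <;> simp_all

/-- The graph obtained from a cycle `C_k` with vertices `v_1, …, v_k` (the `Sum.inl`
vertices) together with disjoint complete graphs `K_{n i}` (the `Sum.inr` vertices),
where every vertex of the `i`-th complete graph is joined to both `v_i` and `v_{i+1}`
(indices mod `k`). -/
def cycleCliques (k : ℕ) (n : Fin k → ℕ) :
    SimpleGraph (Fin k ⊕ Σ i : Fin k, Fin (n i)) where
  Adj a b :=
    match a, b with
    | Sum.inl i, Sum.inl j =>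
        i ≠ j ∧ ((j : ℕ) = ((i : ℕ) + 1) % k ∨ (i : ℕ) = ((j : ℕ) + 1) % k)
    | Sum.inl j, Sum.inr s => (j : ℕ) = (s.1 : ℕ) ∨ (j : ℕ) = ((s.1 : ℕ) + 1) % k
    | Sum.inr s, Sum.inl j => (j : ℕ) = (s.1 : ℕ) ∨ (j : ℕ) = ((s.1 : ℕ) + 1) % k
    | Sum.inr s, Sum.inr t => s ≠ t ∧ s.1 = t.1
  symm := by
    constructor
    rintro (i | s) (j | t) h
    · exact ⟨Ne.symm h.1, h.2.symm⟩
    · exact h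
    · exact h
    · exact ⟨Ne.symm h.1, h.2.symm⟩
  loopless := by
    constructor
    rintro (i | s) h
    · exact h.1 rfl
    · exact h.1 rfl


section Helpers

variable {V : Type*}

/-! ### adjacency in `lsva` -/

@[simp] lemma lsva_adj_inl_inl {G : SimpleGraph V} {v a b : V} {k : ℕ} :
    (lsva G v k).Adj (Sum.inl a) (Sum.inl b) ↔ G.Adj a b := by
  simp [lsva]

@[simp] lemma lsva_adj_inl_inr {G : SimpleGraph V} {v a : V} {k : ℕ} {o : Option (Fin k)} :
    (lsva G v k).Adj (Sum.inl a) (Sum.inr o) ↔ (a = v ∧ o = none) := by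
  simp [lsva]

@[simp] lemma lsva_adj_inr_inl {G : SimpleGraph V} {v a : V} {k : ℕ} {o : Option (Fin k)} :
    (lsva G v k).Adj (Sum.inr o) (Sum.inl a) ↔ (a = v ∧ o = none) := by
  simp [lsva]
  aesop

@[simp] lemma lsva_adj_inr_inr {G : SimpleGraph V} {v : V} {k : ℕ} {o o' : Option (Fin k)} :
    (lsva G v k).Adj (Sum.inr o) (Sum.inr o') ↔
      ((o = none ∧ ∃ i, o' = some i) ∨ (o' = none ∧ ∃ i, o = some i)) := by
  simp [lsva]
  aesop

/-! ### Lemma B : in any zero forcing set of `lsva G v 2`, one of the two leaves is blue -/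

lemma leaf_aux {G : SimpleGraph V} {v : V} {B : Set (V ⊕ Option (Fin 2))}
    {a : V ⊕ Option (Fin 2)} (h : Forced (lsva G v 2) B a) :
    ∀ i : Fin 2, a = Sum.inr (some i) →
      (Sum.inr (some 0) ∈ B ∨ Sum.inr (some 1) ∈ B) := by
  induction h with
  | init u hu =>
    rintro i rfl
    fin_cases i
    · exact Or.inl hu
    · exact Or.inr hu
  | force u t hu hadj hall ihu ihall =>
    rintro i rfl
    -- the forcer of a leaf must be the support vertex
    obtain (a | o) := u
    · rw [lsva_adj_inl_inr] at hadj; exact absurd hadj.2 (by simp)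
    · rw [lsva_adj_inr_inr] at hadj
      have ho : o = none := by
        rcases hadj with ⟨h1, _⟩ | ⟨h1, _⟩
        · exact h1
        · simp at h1
      subst ho
      -- apply the IH to the other leaf
      refine ihall (Sum.inr (some (1 - i))) ?_ ?_ (1 - i) rfl
      · rw [lsva_adj_inr_inr]; exact Or.inl ⟨rfl, _, rfl⟩
      · simp only [ne_eq, Sum.inr.injEq, Option.some.injEq]
        intro hcon
        fin_cases i <;> simp_all

/-! ### Lemma A : projecting the forcing process from `lsva G v 2` back to `G` -/

/-- The projected blue set. -/
def projB {V : Type*} (B' : Set (V ⊕ Option (Fin 2))) (v : V) : Set V :=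
  {u | Sum.inl u ∈ B'} ∪
    {u | u = v ∧ Sum.inr (some 0) ∈ B' ∧ Sum.inr (some 1) ∈ B'}

lemma proj_aux {G : SimpleGraph V} {v : V} {B' : Set (V ⊕ Option (Fin 2))}
    {a : V ⊕ Option (Fin 2)} (h : Forced (lsva G v 2) B' a) :
    (∀ u, a = Sum.inl u → Forced G (projB B' v) u) ∧
    (∀ i : Fin 2, a = Sum.inr (some i) →
      (Sum.inr (some i) ∈ B' ∨ Forced G (projB B' v) v)) := by
  induction h with
  | init u hu =>
    refine ⟨?_, ?_⟩
    · rintro u' rfl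
      exact Forced.init _ (Or.inl hu)
    · rintro i rfl
      exact Or.inl hu
  | force u t hu hadj hall ihu ihall =>
    constructor
    · rintro u' rfl
      obtain (a | o) := u
      · -- forcer is an original vertex
        rw [lsva_adj_inl_inl] at hadj
        refine Forced.force a u' (ihu.1 a rfl) hadj ?_
        intro x hx hne
        exact (ihall (Sum.inl x) (by rwa [lsva_adj_inl_inl])
          (by simpa using hne)).1 x rfl
      · obtain (_ | i) := o
        · -- forcer is the support vertex, target is v
          rw [lsva_adj_inr_inl] at hadj
          obtain ⟨rfl, -⟩ : u' = v ∧ True := ⟨hadj.1, trivial⟩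
          have h0 := (ihall (Sum.inr (some 0)) (by simp) (by simp)).2 0 rfl
          have h1 := (ihall (Sum.inr (some 1)) (by simp) (by simp)).2 1 rfl
          rcases h0 with h0 | h0
          · rcases h1 with h1 | h1
            · exact Forced.init _ (Or.inr ⟨rfl, h0, h1⟩)
            · exact h1
          · exact h0
        · -- a leaf cannot force an original vertex
          rw [lsva_adj_inr_inl] at hadj; exact absurd hadj.2 (by simp)
    · rintro i rfl
      -- the forcer of a leaf is the support vertex; its premises include `Sum.inl v`
      obtain (a | o) := u
      · rw [lsva_adj_inl_inr] at hadj; exact absurd hadj.2 (by simp)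
      · have ho : o = none := by
          rw [lsva_adj_inr_inr] at hadj
          rcases hadj with ⟨h1, _⟩ | ⟨h1, _⟩
          · exact h1
          · simp at h1
        subst ho
        exact Or.inr ((ihall (Sum.inl v) (by simp) (by simp)).1 v rfl)

/-! ### Lifting the forcing process from `G` to `lsva G v 2` -/

lemma lift_aux {G : SimpleGraph V} {v : V} {B : Set V} {B' : Set (V ⊕ Option (Fin 2))}
    (hB : ∀ u ∈ B, Sum.inl u ∈ B') (hw : Forced (lsva G v 2) B' (Sum.inr none))
    {u : V} (h : Forced G B u) : Forced (lsva G v 2) B' (Sum.inl u) := by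
  induction h with
  | init u hu => exact Forced.init _ (hB u hu)
  | force a u ha hadj hall iha ihall =>
    refine Forced.force (Sum.inl a) (Sum.inl u) iha (by rwa [lsva_adj_inl_inl]) ?_
    rintro (b | o) hx hne
    · rw [lsva_adj_inl_inl] at hx
      exact ihall b hx (by simpa using hne)
    · rw [lsva_adj_inl_inr] at hx
      obtain ⟨-, rfl⟩ := hx
      exact hw

/-- A zero forcing set of `G` plus one leaf is a zero forcing set of `lsva G v 2`. -/
lemma isZFS_lift {G : SimpleGraph V} {v : V} {B : Set V} (hB : IsZFS G B) :
    IsZFS (lsva G v 2) (insert (Sum.inr (some 0)) (Sum.inl '' B)) := by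
  set B' : Set (V ⊕ Option (Fin 2)) := insert (Sum.inr (some 0)) (Sum.inl '' B) with hB'
  have hmem : ∀ u ∈ B, Sum.inl u ∈ B' := fun u hu => Or.inr ⟨u, hu, rfl⟩
  have hx0 : Forced (lsva G v 2) B' (Sum.inr (some 0)) := Forced.init _ (Or.inl rfl)
  have hw : Forced (lsva G v 2) B' (Sum.inr none) := by
    refine Forced.force (Sum.inr (some 0)) (Sum.inr none) hx0 (by simp) ?_
    rintro (b | o) hx hne
    · rw [lsva_adj_inr_inl] at hx; exact absurd hx.2 (by simp)
    · rw [lsva_adj_inr_inr] at hx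
      rcases hx with ⟨h1, _⟩ | ⟨h1, _⟩
      · simp at h1
      · exact absurd h1 (by simpa using hne)
  have hlift : ∀ u : V, Forced (lsva G v 2) B' (Sum.inl u) :=
    fun u => lift_aux hmem hw (hB u)
  rintro (u | (_ | i))
  · exact hlift u
  · exact hw
  · -- leaves
    fin_cases i
    · exact hx0
    · refine Forced.force (Sum.inr none) (Sum.inr (some 1)) hw (by simp) ?_
      rintro (b | o) hx hne
      · rw [lsva_adj_inr_inl] at hx
        obtain ⟨h, -⟩ := hx
        subst h
        exact hlift _
      · rw [lsva_adj_inr_inr] at hx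
        rcases hx with ⟨h1, i, rfl⟩ | ⟨h1, j, hj⟩
        · have h0 : i = 0 := by
            have h1' : i ≠ 1 := fun hc => hne (by rw [hc])
            omega
          subst h0; exact hx0
        · exact absurd hj (by simp)

/-! ### Vertex covers and `lsva` -/

lemma isVC_lift {G : SimpleGraph V} {v : V} {C : Set V} (hC : IsVC G C) :
    IsVC (lsva G v 2) (insert (Sum.inr none) (Sum.inl '' C)) := by
  rintro (a | o) (b | o') hadj
  · rw [lsva_adj_inl_inl] at hadj
    rcases hC hadj with h | h
    · exact Or.inl (Or.inr ⟨a, h, rfl⟩)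
    · exact Or.inr (Or.inr ⟨b, h, rfl⟩)
  · rw [lsva_adj_inl_inr] at hadj
    obtain ⟨-, rfl⟩ := hadj
    exact Or.inr (Set.mem_insert _ _)
  · rw [lsva_adj_inr_inl] at hadj
    obtain ⟨-, rfl⟩ := hadj
    exact Or.inl (Set.mem_insert _ _)
  · rw [lsva_adj_inr_inr] at hadj
    rcases hadj with ⟨h, -⟩ | ⟨h, -⟩
    · exact Or.inl (h ▸ Set.mem_insert _ _)
    · exact Or.inr (h ▸ Set.mem_insert _ _)

lemma isVC_proj {G : SimpleGraph V} {v : V} {C' : Set (V ⊕ Option (Fin 2))}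
    (hC' : IsVC (lsva G v 2) C') : IsVC G (Sum.inl ⁻¹' C') := by
  intro a b hadj
  exact hC' (u := Sum.inl a) (w := Sum.inl b) (by rwa [lsva_adj_inl_inl])

/-! ### Numeric step lemmas -/

lemma ncard_preimage_inl_le {B' : Set (V ⊕ Option (Fin 2))} [Finite V]
    {x : V ⊕ Option (Fin 2)} (hx : x ∈ B') (hx' : ∀ u : V, x ≠ Sum.inl u) :
    (Sum.inl ⁻¹' B' : Set V).ncard + 1 ≤ B'.ncard := by
  have hsub : Sum.inl '' (Sum.inl ⁻¹' B') ⊆ B' \ {x} := by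
    rintro y ⟨u, hu, rfl⟩
    exact ⟨hu, fun hc => hx' u (by simp at hc; rw [hc])⟩
  have h1 : (Sum.inl '' (Sum.inl ⁻¹' B' : Set V)).ncard ≤ (B' \ {x}).ncard :=
    Set.ncard_le_ncard hsub (Set.toFinite _)
  rw [Set.ncard_image_of_injective _ Sum.inl_injective] at h1
  have h2 : (B' \ {x}).ncard = B'.ncard - 1 := by
    rw [Set.ncard_diff_singleton_of_mem hx]
  have h3 : 1 ≤ B'.ncard := (Set.ncard_pos (Set.toFinite _)).mpr ⟨x, hx⟩
  omega

lemma ncard_preimage_inl_le_two {B' : Set (V ⊕ Option (Fin 2))} [Finite V]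
    {x y : V ⊕ Option (Fin 2)} (hx : x ∈ B') (hy : y ∈ B') (hxy : x ≠ y)
    (hx' : ∀ u : V, x ≠ Sum.inl u) (hy' : ∀ u : V, y ≠ Sum.inl u) :
    (Sum.inl ⁻¹' B' : Set V).ncard + 2 ≤ B'.ncard := by
  have hsub : Sum.inl '' (Sum.inl ⁻¹' B') ⊆ B' \ {x, y} := by
    rintro z ⟨u, hu, rfl⟩
    refine ⟨hu, ?_⟩
    rintro (hc | hc)
    · exact hx' u (by rw [hc])
    · exact hy' u (by rw [hc])
  have h1 : (Sum.inl '' (Sum.inl ⁻¹' B' : Set V)).ncard ≤ (B' \ {x, y}).ncard :=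
    Set.ncard_le_ncard hsub (Set.toFinite _)
  rw [Set.ncard_image_of_injective _ Sum.inl_injective] at h1
  have hpair : ({x, y} : Set (V ⊕ Option (Fin 2))) ⊆ B' := by
    rintro z (rfl | rfl) <;> assumption
  have h2 : (B' \ {x, y}).ncard = B'.ncard - 2 := by
    rw [Set.ncard_diff hpair, Set.ncard_pair hxy]
  have h3 : 2 ≤ B'.ncard := by
    have := Set.ncard_le_ncard hpair (Set.toFinite _)
    rwa [Set.ncard_pair hxy] at this
  omega

lemma zf_set_nonempty (G : SimpleGraph V) [Finite V] :
    {m : ℕ | ∃ B : Set V, IsZFS G B ∧ B.ncard = m}.Nonempty :=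
  ⟨(Set.univ : Set V).ncard, Set.univ, fun u => Forced.init u trivial, rfl⟩

lemma vc_set_nonempty (G : SimpleGraph V) [Finite V] :
    {m : ℕ | ∃ C : Set V, IsVC G C ∧ C.ncard = m}.Nonempty :=
  ⟨(Set.univ : Set V).ncard, Set.univ, fun u w _ => Or.inl trivial, rfl⟩

lemma zfNum_lsva (G : SimpleGraph V) [Finite V] (v : V) :
    zfNum (lsva G v 2) = zfNum G + 1 := by
  have key : ∀ o : Option (Fin 2), ∀ u : V, (Sum.inr o : V ⊕ Option (Fin 2)) ≠ Sum.inl u := by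
    intro o u h; exact absurd h (by simp)
  apply le_antisymm
  · obtain ⟨B, hB, hcard⟩ := Nat.sInf_mem (zf_set_nonempty G)
    refine Nat.sInf_le ⟨insert (Sum.inr (some 0)) (Sum.inl '' B), isZFS_lift hB, ?_⟩
    rw [Set.ncard_insert_of_notMem (by simp) (Set.toFinite _),
      Set.ncard_image_of_injective _ Sum.inl_injective, hcard]
    rfl
  · obtain ⟨B', hB', hcard'⟩ := Nat.sInf_mem (zf_set_nonempty (lsva G v 2))
    have hz : zfNum (lsva G v 2) = B'.ncard := hcard'.symm
    have hZ : IsZFS G (projB B' v) := fun u => (proj_aux (hB' (Sum.inl u))).1 u rfl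
    have hleaf : Sum.inr (some 0) ∈ B' ∨ Sum.inr (some 1) ∈ B' :=
      leaf_aux (hB' (Sum.inr (some 0))) 0 rfl
    by_cases hboth : Sum.inr (some 0) ∈ B' ∧ Sum.inr (some 1) ∈ B'
    · -- both leaves blue : `projB ⊆ insert v (inl ⁻¹' B')`
      have hsub : projB B' v ⊆ insert v (Sum.inl ⁻¹' B') := by
        rintro u (hu | ⟨rfl, -, -⟩)
        · exact Or.inr hu
        · exact Or.inl rfl
      have h1 : (projB B' v).ncard ≤ (Sum.inl ⁻¹' B' : Set V).ncard + 1 :=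
        le_trans (Set.ncard_le_ncard hsub (Set.toFinite _)) (Set.ncard_insert_le _ _)
      have h2 := ncard_preimage_inl_le_two hboth.1 hboth.2 (by simp) (key _) (key _)
      have h3 : zfNum G ≤ (projB B' v).ncard := Nat.sInf_le ⟨projB B' v, hZ, rfl⟩
      omega
    · -- one leaf blue
      have hsub : projB B' v ⊆ Sum.inl ⁻¹' B' := by
        rintro u (hu | ⟨rfl, h0, h1⟩)
        · exact hu
        · exact absurd ⟨h0, h1⟩ hboth
      have hx : ∃ x ∈ B', ∀ u : V, x ≠ Sum.inl u := by
        rcases hleaf with h | h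
        · exact ⟨_, h, key _⟩
        · exact ⟨_, h, key _⟩
      obtain ⟨x, hxB, hx'⟩ := hx
      have h2 := ncard_preimage_inl_le hxB hx'
      have h1 : (projB B' v).ncard ≤ (Sum.inl ⁻¹' B' : Set V).ncard :=
        Set.ncard_le_ncard hsub (Set.toFinite _)
      have h3 : zfNum G ≤ (projB B' v).ncard := Nat.sInf_le ⟨projB B' v, hZ, rfl⟩
      omega

lemma vcNum_lsva (G : SimpleGraph V) [Finite V] (v : V) :
    vcNum (lsva G v 2) = vcNum G + 1 := by
  apply le_antisymm
  · obtain ⟨C, hC, hcard⟩ := Nat.sInf_mem (vc_set_nonempty G)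
    refine Nat.sInf_le ⟨insert (Sum.inr none) (Sum.inl '' C), isVC_lift hC, ?_⟩
    rw [Set.ncard_insert_of_notMem (by simp) (Set.toFinite _),
      Set.ncard_image_of_injective _ Sum.inl_injective, hcard]
    rfl
  · obtain ⟨C', hC', hcard'⟩ := Nat.sInf_mem (vc_set_nonempty (lsva G v 2))
    have hz : vcNum (lsva G v 2) = C'.ncard := hcard'.symm
    have hV : IsVC G (Sum.inl ⁻¹' C') := isVC_proj hC'
    have hhit : Sum.inr none ∈ C' ∨ (Sum.inr (some 0) : V ⊕ Option (Fin 2)) ∈ C' := by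
      have := hC' (u := Sum.inr none) (w := Sum.inr (some 0)) (by simp)
      exact this
    have hx : ∃ x ∈ C', ∀ u : V, x ≠ Sum.inl u := by
      rcases hhit with h | h
      · exact ⟨_, h, fun u hc => absurd hc (by simp)⟩
      · exact ⟨_, h, fun u hc => absurd hc (by simp)⟩
    obtain ⟨x, hxC, hx'⟩ := hx
    have h2 := ncard_preimage_inl_le hxC hx'
    have h3 : vcNum G ≤ (Sum.inl ⁻¹' C' : Set V).ncard := Nat.sInf_le ⟨_, hV, rfl⟩
    omega

/-! ### Degrees -/

lemma degSet_le_of_maxDeg [Finite V] {G : SimpleGraph V} (u : V) :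
    degSet G u ≤ maxDeg G := by
  have hbdd : BddAbove {d : ℕ | ∃ v, degSet G v = d} := by
    refine ⟨Nat.card V, ?_⟩
    rintro d ⟨x, rfl⟩
    have h : (G.neighborSet x).ncard ≤ (Set.univ : Set V).ncard :=
      Set.ncard_le_ncard (Set.subset_univ _) (Set.toFinite _)
    rwa [Set.ncard_univ] at h
  exact le_csSup hbdd ⟨u, rfl⟩

lemma maxDeg_eq_of [Finite V] {G : SimpleGraph V} {n : ℕ}
    (h1 : ∃ u, degSet G u = n) (h2 : ∀ u, degSet G u ≤ n) : maxDeg G = n := by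
  apply le_antisymm
  · exact csSup_le ⟨n, h1⟩ (by rintro d ⟨u, rfl⟩; exact h2 u)
  · obtain ⟨u, hu⟩ := h1
    have hbdd : BddAbove {d : ℕ | ∃ v, degSet G v = d} := by
      refine ⟨n, ?_⟩
      rintro d ⟨x, rfl⟩
      exact h2 x
    exact hu ▸ le_csSup hbdd ⟨u, rfl⟩

lemma neighborSet_lsva_inl_ne {G : SimpleGraph V} {v u : V} (h : u ≠ v) :
    (lsva G v 2).neighborSet (Sum.inl u) = Sum.inl '' G.neighborSet u := by
  ext x
  obtain (b | o) := x
  · simp [SimpleGraph.neighborSet]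
  · simp [SimpleGraph.neighborSet, h]

lemma neighborSet_lsva_inl_eq {G : SimpleGraph V} {v : V} :
    (lsva G v 2).neighborSet (Sum.inl v) =
      insert (Sum.inr none) (Sum.inl '' G.neighborSet v) := by
  ext x
  obtain (b | o) := x
  · simp [SimpleGraph.neighborSet]
  · simp [SimpleGraph.neighborSet]

lemma degSet_lsva_inl_ne {G : SimpleGraph V} {v u : V} (h : u ≠ v) :
    degSet (lsva G v 2) (Sum.inl u) = degSet G u := by
  unfold degSet
  rw [neighborSet_lsva_inl_ne h, Set.ncard_image_of_injective _ Sum.inl_injective]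

lemma degSet_lsva_inl_eq {G : SimpleGraph V} {v : V} [Finite V] :
    degSet (lsva G v 2) (Sum.inl v) = degSet G v + 1 := by
  unfold degSet
  rw [neighborSet_lsva_inl_eq, Set.ncard_insert_of_notMem (by simp) (Set.toFinite _),
    Set.ncard_image_of_injective _ Sum.inl_injective]

lemma degSet_lsva_w {G : SimpleGraph V} {v : V} :
    degSet (lsva G v 2) (Sum.inr none) = 3 := by
  have h : (lsva G v 2).neighborSet (Sum.inr none) =
      {Sum.inl v, Sum.inr (some 0), Sum.inr (some 1)} := by
    ext x
    obtain (b | (_ | i)) := x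
    · simp [SimpleGraph.neighborSet]
    · simp [SimpleGraph.neighborSet]
    · simp only [SimpleGraph.neighborSet, Set.mem_setOf_eq, lsva_adj_inr_inr,
        Set.mem_insert_iff, Set.mem_singleton_iff]
      constructor
      · rintro (⟨-, j, hj⟩ | ⟨h1, -⟩)
        · fin_cases i
          · exact Or.inr (Or.inl rfl)
          · exact Or.inr (Or.inr rfl)
        · exact absurd h1 (by simp)
      · rintro (h | h | h)
        · exact absurd h (by simp)
        · exact Or.inl ⟨trivial, i, rfl⟩
        · exact Or.inl ⟨trivial, i, rfl⟩
  unfold degSet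
  rw [h, Set.ncard_insert_of_notMem (by simp), Set.ncard_insert_of_notMem (by simp),
    Set.ncard_singleton]

lemma degSet_lsva_leaf {G : SimpleGraph V} {v : V} (i : Fin 2) :
    degSet (lsva G v 2) (Sum.inr (some i)) = 1 := by
  have h : (lsva G v 2).neighborSet (Sum.inr (some i)) = {Sum.inr none} := by
    ext x
    obtain (b | (_ | j)) := x
    · simp [SimpleGraph.neighborSet]
    · simp [SimpleGraph.neighborSet]
    · simp [SimpleGraph.neighborSet]
  unfold degSet
  rw [h, Set.ncard_singleton]

lemma maxDeg_lsva [Finite V] {G : SimpleGraph V} {v : V}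
    (hmax : maxDeg G = 3) (hv : (G.neighborSet v).ncard ≤ 1) :
    maxDeg (lsva G v 2) = 3 := by
  apply maxDeg_eq_of
  · exact ⟨Sum.inr none, degSet_lsva_w⟩
  · rintro (u | (_ | i))
    · by_cases h : u = v
      · subst h
        rw [degSet_lsva_inl_eq]
        have : degSet G u ≤ 1 := hv
        omega
      · rw [degSet_lsva_inl_ne h]
        have := degSet_le_of_maxDeg (G := G) u
        omega
    · rw [degSet_lsva_w]
    · rw [degSet_lsva_leaf]; omega

/-! ### The base graph `K_{2,3}` -/

private abbrev K23 : SimpleGraph (Fin 2 ⊕ Fin 3) := completeBipartiteGraph (Fin 2) (Fin 3)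

lemma K23_adj {a b : Fin 2 ⊕ Fin 3} :
    K23.Adj a b ↔ ((∃ x y, a = Sum.inl x ∧ b = Sum.inr y) ∨
      (∃ x y, a = Sum.inr x ∧ b = Sum.inl y)) := by
  obtain (x | x) := a <;> obtain (y | y) := b <;>
    simp [K23, completeBipartiteGraph]

lemma K23_maxDeg : maxDeg K23 = 3 := by
  have hl : ∀ a : Fin 2, degSet K23 (Sum.inl a) = 3 := by
    intro a
    have h : K23.neighborSet (Sum.inl a) = Sum.inr '' Set.univ := by
      ext x
      obtain (y | y) := x <;> simp [SimpleGraph.neighborSet, completeBipartiteGraph]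
    unfold degSet
    rw [h, Set.ncard_image_of_injective _ Sum.inr_injective, Set.ncard_univ]
    simp
  have hr : ∀ b : Fin 3, degSet K23 (Sum.inr b) = 2 := by
    intro b
    have h : K23.neighborSet (Sum.inr b) = Sum.inl '' Set.univ := by
      ext x
      obtain (y | y) := x <;> simp [SimpleGraph.neighborSet, completeBipartiteGraph]
    unfold degSet
    rw [h, Set.ncard_image_of_injective _ Sum.inl_injective, Set.ncard_univ]
    simp
  apply maxDeg_eq_of
  · exact ⟨Sum.inl 0, hl 0⟩
  · rintro (a | b)
    · rw [hl]
    · rw [hr]; omega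

lemma K23_pairR {B : Set (Fin 2 ⊕ Fin 3)} {a : Fin 2 ⊕ Fin 3} (h : Forced K23 B a) :
    ∀ b b' : Fin 3, b ≠ b' → a = Sum.inr b → (Sum.inr b ∈ B ∨ Sum.inr b' ∈ B) := by
  induction h with
  | init u hu => rintro b b' hne rfl; exact Or.inl hu
  | force u t hu hadj hall ihu ihall =>
    rintro b b' hne rfl
    obtain (l | r) := u
    · refine Or.symm (ihall (Sum.inr b') ?_ ?_ b' b hne.symm rfl)
      · simp [K23, completeBipartiteGraph]
      · simp [hne.symm]
    · rw [K23_adj] at hadj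
      rcases hadj with ⟨x, y, hx, -⟩ | ⟨x, y, -, hy⟩ <;> simp_all

lemma K23_pairL {B : Set (Fin 2 ⊕ Fin 3)} {a : Fin 2 ⊕ Fin 3} (h : Forced K23 B a) :
    ∀ b b' : Fin 2, b ≠ b' → a = Sum.inl b → (Sum.inl b ∈ B ∨ Sum.inl b' ∈ B) := by
  induction h with
  | init u hu => rintro b b' hne rfl; exact Or.inl hu
  | force u t hu hadj hall ihu ihall =>
    rintro b b' hne rfl
    obtain (l | r) := u
    · rw [K23_adj] at hadj
      rcases hadj with ⟨x, y, -, hy⟩ | ⟨x, y, hx, -⟩ <;> simp_all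
    · refine Or.symm (ihall (Sum.inl b') ?_ ?_ b' b hne.symm rfl)
      · simp [K23, completeBipartiteGraph]
      · simp [hne.symm]

lemma K23_zfNum : zfNum K23 = 3 := by
  apply le_antisymm
  · -- `{inl 0, inr 0, inr 1}` is a zero forcing set
    set B₀ : Set (Fin 2 ⊕ Fin 3) := {Sum.inl 0, Sum.inr 0, Sum.inr 1} with hB₀
    have h00 : Forced K23 B₀ (Sum.inl 0) := Forced.init _ (by simp [hB₀])
    have hr0 : Forced K23 B₀ (Sum.inr 0) := Forced.init _ (by simp [hB₀])
    have hr1 : Forced K23 B₀ (Sum.inr 1) := Forced.init _ (by simp [hB₀])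
    have hr2 : Forced K23 B₀ (Sum.inr 2) := by
      refine Forced.force (Sum.inl 0) (Sum.inr 2) h00 (by simp [K23, completeBipartiteGraph]) ?_
      rintro (a | b) hx hne
      · rw [K23_adj] at hx; rcases hx with ⟨x, y, -, hy⟩ | ⟨x, y, hx, -⟩ <;> simp_all
      · have hb : b ≠ 2 := fun hc => hne (by rw [hc])
        fin_cases b
        · exact hr0
        · exact hr1
        · exact absurd rfl hb
    have hl1 : Forced K23 B₀ (Sum.inl 1) := by
      refine Forced.force (Sum.inr 0) (Sum.inl 1) hr0 (by simp [K23, completeBipartiteGraph]) ?_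
      rintro (a | b) hx hne
      · have ha : a ≠ 1 := fun hc => hne (by rw [hc])
        fin_cases a
        · exact h00
        · exact absurd rfl ha
      · rw [K23_adj] at hx; rcases hx with ⟨x, y, hx, -⟩ | ⟨x, y, -, hy⟩ <;> simp_all
    have hZ : IsZFS K23 B₀ := by
      rintro (a | b)
      · fin_cases a
        · exact h00
        · exact hl1
      · fin_cases b
        · exact hr0
        · exact hr1
        · exact hr2
    refine Nat.sInf_le ⟨B₀, hZ, ?_⟩
    rw [hB₀, Set.ncard_insert_of_notMem (by simp), Set.ncard_insert_of_notMem (by simp),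
      Set.ncard_singleton]
  · refine le_csInf (zf_set_nonempty _) ?_
    rintro n ⟨B, hB, rfl⟩
    have hR01 := K23_pairR (hB (Sum.inr 0)) 0 1 (by decide) rfl
    have hR02 := K23_pairR (hB (Sum.inr 0)) 0 2 (by decide) rfl
    have hR12 := K23_pairR (hB (Sum.inr 1)) 1 2 (by decide) rfl
    have hL := K23_pairL (hB (Sum.inl 0)) 0 1 (by decide) rfl
    have hex : ∃ r1 r2 : Fin 3, r1 ≠ r2 ∧ Sum.inr r1 ∈ B ∧ Sum.inr r2 ∈ B := by
      rcases hR01 with h0 | h1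
      · rcases hR12 with h1 | h2
        · exact ⟨0, 1, by decide, h0, h1⟩
        · exact ⟨0, 2, by decide, h0, h2⟩
      · rcases hR02 with h0 | h2
        · exact ⟨0, 1, by decide, h0, h1⟩
        · exact ⟨1, 2, by decide, h1, h2⟩
    obtain ⟨r1, r2, hr, h1, h2⟩ := hex
    have hl : ∃ l : Fin 2, Sum.inl l ∈ B := by
      rcases hL with h | h
      · exact ⟨0, h⟩
      · exact ⟨1, h⟩
    obtain ⟨l, hlB⟩ := hl
    have h3 : 2 < B.ncard := by
      rw [Set.two_lt_ncard (Set.toFinite _)]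
      exact ⟨Sum.inl l, hlB, Sum.inr r1, h1, Sum.inr r2, h2, by simp, by simp,
        by simp [hr]⟩
    omega

lemma K23_vcNum : vcNum K23 = 2 := by
  apply le_antisymm
  · refine Nat.sInf_le ⟨{Sum.inl 0, Sum.inl 1}, ?_, ?_⟩
    · rintro (a | b) (a' | b') hadj
      · rw [K23_adj] at hadj; rcases hadj with ⟨x, y, hx, hy⟩ | ⟨x, y, hx, hy⟩ <;> simp_all
      · refine Or.inl ?_
        fin_cases a
        · exact Or.inl rfl
        · exact Or.inr rfl
      · refine Or.inr ?_
        fin_cases a'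
        · exact Or.inl rfl
        · exact Or.inr rfl
      · rw [K23_adj] at hadj; rcases hadj with ⟨x, y, hx, hy⟩ | ⟨x, y, hx, hy⟩ <;> simp_all
    · rw [Set.ncard_insert_of_notMem (by simp), Set.ncard_singleton]
  · refine le_csInf (vc_set_nonempty _) ?_
    rintro n ⟨C, hC, rfl⟩
    have h1 := hC (u := Sum.inl 0) (w := Sum.inr 0) (by simp [K23, completeBipartiteGraph])
    have h2 := hC (u := Sum.inl 1) (w := Sum.inr 1) (by simp [K23, completeBipartiteGraph])
    have h3 : 1 < C.ncard := by
      rw [Set.one_lt_ncard (Set.toFinite _)]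
      rcases h1 with h1 | h1 <;> rcases h2 with h2 | h2
      · exact ⟨_, h1, _, h2, by simp⟩
      · exact ⟨_, h1, _, h2, by simp⟩
      · exact ⟨_, h1, _, h2, by simp⟩
      · exact ⟨_, h1, _, h2, by simp⟩
    omega

/-! ### The chain invariant -/

lemma chain_invariant {α : Type} {G : SimpleGraph α} {β : Type} {H : SimpleGraph β}
    (h : LSVAChain 2 G H) :
    (Finite α ∧ maxDeg G = 3 ∧ zfNum G = vcNum G + 1) →
      (Finite β ∧ maxDeg H = 3 ∧ zfNum H = vcNum H + 1) := by
  induction h with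
  | refl => exact id
  | step v hv hchain ih =>
    intro base
    obtain ⟨hf, hm, hz⟩ := ih base
    haveI := hf
    refine ⟨by infer_instance, maxDeg_lsva hm (by simpa using hv), ?_⟩
    rw [zfNum_lsva, vcNum_lsva, hz]

end Helpers

/-- Every graph obtained from `K_{2,3}` by a finite sequence of 2-leaf
support vertex additions has maximum degree 3 and satisfies `Z(G) = β(G) + 1`. -/
theorem stmt17 {V : Type} [Fintype V] (G : SimpleGraph V)
    (hG : LSVAChain 2 (completeBipartiteGraph (Fin 2) (Fin 3)) G) :
    maxDeg G = 3 ∧ zfNum G = vcNum G + 1 := by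
  have base : Finite (Fin 2 ⊕ Fin 3) ∧ maxDeg K23 = 3 ∧ zfNum K23 = vcNum K23 + 1 :=
    ⟨by infer_instance, K23_maxDeg, by rw [K23_zfNum, K23_vcNum]⟩
  obtain ⟨-, h1, h2⟩ := chain_invariant hG base
  exact ⟨h1, h2⟩

end ZFPaper
end

section
/- Let k ≥ 3 and let G be the graph obtained from a cycle C_k with vertices v_1, …, v_k by taking k disjoint copies of K_2 and, for each i = 1, …, k, joining both vertices of the i-th copy of K_2 to v_i and v_{i+1} (indices modulo k). Then G has n = 3k vertices, maximum degree Δ = 6, minimum degree δ = 3, and satisfies Z(G) = β(G) = 2k, which is strictly less than ((Δ − 2)n − (Δ − δ) + 2)/(Δ − 1) = (12k − 1)/5. -/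
open SimpleGraph

namespace ZFPaper

variable {V : Type*} {W : Type*}

section Stmt18Proof

open Sum Function

variable {k : ℕ} [NeZero k]

private abbrev Gk (k : ℕ) : SimpleGraph (Fin k ⊕ Σ _i : Fin k, Fin 2) :=
  cycleCliques k fun _ => 2

private lemma val_one' (hk : 3 ≤ k) : ((1 : Fin k) : ℕ) = 1 := by
  rw [Fin.val_one']; exact Nat.mod_eq_of_lt (by omega)

private lemma val_add_one (hk : 3 ≤ k) (i : Fin k) :
    ((i + 1 : Fin k) : ℕ) = ((i : ℕ) + 1) % k := by
  rw [Fin.val_add, val_one' hk]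

private lemma fone_ne_zero (hk : 3 ≤ k) : (1 : Fin k) ≠ 0 := by
  intro h
  have h2 := congrArg Fin.val h
  rw [val_one' hk, Fin.val_zero] at h2
  exact one_ne_zero h2

private lemma add_one_ne (hk : 3 ≤ k) (i : Fin k) : i + 1 ≠ i := by
  intro h
  rw [add_comm] at h
  exact fone_ne_zero hk (add_eq_right.mp h)

private lemma sub_one_ne (hk : 3 ≤ k) (i : Fin k) : i - 1 ≠ i := by
  intro h
  have h2 : i = i + 1 := (sub_eq_iff_eq_add.mp h)
  exact add_one_ne hk i h2.symm

private lemma ftwo_ne_zero (hk : 3 ≤ k) : (1 + 1 : Fin k) ≠ 0 := by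
  intro h
  have h2 := congrArg Fin.val h
  rw [Fin.val_add, val_one' hk, Fin.val_zero, Nat.mod_eq_of_lt (by omega)] at h2
  omega

private lemma add_one_ne_sub_one (hk : 3 ≤ k) (i : Fin k) : i + 1 ≠ i - 1 := by
  intro h
  have h2 : i + 1 + 1 = i := by rw [h, sub_add_cancel]
  rw [add_assoc] at h2
  exact ftwo_ne_zero hk (add_eq_left.mp h2)

private lemma fin_eq_succ (hk : 3 ≤ k) {i j : Fin k} :
    (j : ℕ) = ((i : ℕ) + 1) % k ↔ j = i + 1 := by
  rw [Fin.ext_iff, val_add_one hk]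

private lemma adj_ll (hk : 3 ≤ k) {i j : Fin k} :
    (Gk k).Adj (inl i) (inl j) ↔ j = i + 1 ∨ i = j + 1 := by
  show i ≠ j ∧ ((j : ℕ) = ((i : ℕ) + 1) % k ∨ (i : ℕ) = ((j : ℕ) + 1) % k) ↔ _
  rw [fin_eq_succ hk, fin_eq_succ hk]
  constructor
  · exact fun h => h.2
  · rintro (rfl | rfl)
    · exact ⟨Ne.symm (add_one_ne hk i), Or.inl rfl⟩
    · exact ⟨add_one_ne hk j, Or.inr rfl⟩

private lemma adj_lr (hk : 3 ≤ k) {j i : Fin k} {a : Fin 2} :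
    (Gk k).Adj (inl j) (inr ⟨i, a⟩) ↔ j = i ∨ j = i + 1 := by
  show (j : ℕ) = (i : ℕ) ∨ (j : ℕ) = ((i : ℕ) + 1) % k ↔ _
  rw [fin_eq_succ hk, Fin.val_inj]

private lemma adj_rl (hk : 3 ≤ k) {j i : Fin k} {a : Fin 2} :
    (Gk k).Adj (inr ⟨i, a⟩) (inl j) ↔ j = i ∨ j = i + 1 := by
  show (j : ℕ) = (i : ℕ) ∨ (j : ℕ) = ((i : ℕ) + 1) % k ↔ _
  rw [fin_eq_succ hk, Fin.val_inj]

private lemma adj_rr {s t : Σ _i : Fin k, Fin 2} :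
    (Gk k).Adj (inr s) (inr t) ↔ s ≠ t ∧ s.1 = t.1 := Iff.rfl

private lemma fin2_cases (a : Fin 2) : a = 0 ∨ a = 1 := by
  rcases a with ⟨(_ | _ | n), h⟩
  · exact Or.inl rfl
  · exact Or.inr rfl
  · omega

private lemma fin2_ne {a b c : Fin 2} (hab : a ≠ b) (hca : c ≠ a) : c = b := by
  revert hab hca; revert a b c; decide

end Stmt18Proof
section Stmt18Proof2

open Sum Function

variable {k : ℕ} [NeZero k]

private lemma fin2_succ : ∀ {a b : Fin 2}, b ≠ a ↔ b = a + 1 := by decide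

private lemma sig_ext {i i' : Fin k} {a b : Fin 2} :
    (⟨i, a⟩ : Σ _i : Fin k, Fin 2) = ⟨i', b⟩ ↔ i = i' ∧ a = b := by
  constructor
  · intro h
    refine ⟨congrArg Sigma.fst h, ?_⟩
    cases h; rfl
  · rintro ⟨rfl, rfl⟩; rfl

private lemma nbhd_r (hk : 3 ≤ k) (i : Fin k) (a : Fin 2) :
    (Gk k).neighborSet (inr ⟨i, a⟩) =
      {inl i, inl (i + 1), inr ⟨i, a + 1⟩} := by
  ext x
  rcases x with j | ⟨i', b⟩
  · rw [SimpleGraph.mem_neighborSet, SimpleGraph.adj_comm, adj_lr hk]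
    simp
  · rw [SimpleGraph.mem_neighborSet, adj_rr]
    simp only [Set.mem_insert_iff, Set.mem_singleton_iff, reduceCtorEq, inr.injEq, false_or,
      sig_ext]
    constructor
    · rintro ⟨hne, rfl⟩
      refine ⟨rfl, fin2_succ.mp fun hba => hne ?_⟩
      rw [sig_ext]; exact ⟨rfl, hba.symm⟩
    · rintro ⟨rfl, rfl⟩
      refine ⟨fun h => ?_, rfl⟩
      rw [sig_ext] at h
      exact (by decide : ∀ c : Fin 2, c ≠ c + 1) a h.2

private lemma nbhd_l (hk : 3 ≤ k) (j : Fin k) :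
    (Gk k).neighborSet (inl j) =
      {inl (j + 1), inl (j - 1), inr ⟨j, 0⟩, inr ⟨j, 1⟩, inr ⟨j - 1, 0⟩, inr ⟨j - 1, 1⟩} := by
  ext x
  rcases x with m | ⟨i, b⟩
  · rw [SimpleGraph.mem_neighborSet, adj_ll hk]
    simp only [Set.mem_insert_iff, Set.mem_singleton_iff, inl.injEq, reduceCtorEq, or_false]
    constructor
    · rintro (rfl | h)
      · exact Or.inl rfl
      · exact Or.inr (eq_sub_of_add_eq h.symm)
    · rintro (rfl | rfl)
      · exact Or.inl rfl
      · exact Or.inr (by rw [sub_add_cancel])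
  · rw [SimpleGraph.mem_neighborSet, adj_lr hk]
    simp only [Set.mem_insert_iff, Set.mem_singleton_iff, reduceCtorEq, inr.injEq, false_or,
      sig_ext]
    constructor
    · rintro (rfl | rfl)
      · rcases fin2_cases b with rfl | rfl
        · exact Or.inl ⟨rfl, rfl⟩
        · exact Or.inr (Or.inl ⟨rfl, rfl⟩)
      · rcases fin2_cases b with rfl | rfl
        · exact Or.inr (Or.inr (Or.inl ⟨(by rw [add_sub_cancel_right]), rfl⟩))
        · exact Or.inr (Or.inr (Or.inr ⟨(by rw [add_sub_cancel_right]), rfl⟩))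
    · rintro (⟨rfl, rfl⟩ | ⟨rfl, rfl⟩ | ⟨rfl, rfl⟩ | ⟨rfl, rfl⟩)
      · exact Or.inl rfl
      · exact Or.inl rfl
      · exact Or.inr (by rw [sub_add_cancel])
      · exact Or.inr (by rw [sub_add_cancel])

end Stmt18Proof2
section Stmt18Proof3

open Sum Function

variable {k : ℕ} [NeZero k]

private lemma deg_r (hk : 3 ≤ k) (i : Fin k) (a : Fin 2) :
    degSet (Gk k) (inr ⟨i, a⟩) = 3 := by
  rw [degSet, nbhd_r hk]
  rw [Set.ncard_insert_of_notMem, Set.ncard_insert_of_notMem, Set.ncard_singleton]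
  · simp only [Set.mem_singleton_iff]
    exact inl_ne_inr
  · simp only [Set.mem_insert_iff, Set.mem_singleton_iff]
    rintro (h | h)
    · exact add_one_ne hk i (inl_injective h).symm
    · exact inl_ne_inr h

private lemma deg_l (hk : 3 ≤ k) (j : Fin k) :
    degSet (Gk k) (inl j) = 6 := by
  have h1 : j + 1 ≠ j - 1 := add_one_ne_sub_one hk j
  have h2 : j ≠ j - 1 := (sub_one_ne hk j).symm
  have h01 : (0 : Fin 2) ≠ 1 := by decide
  rw [degSet, nbhd_l hk]
  rw [Set.ncard_insert_of_notMem, Set.ncard_insert_of_notMem,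
    Set.ncard_insert_of_notMem, Set.ncard_insert_of_notMem,
    Set.ncard_insert_of_notMem, Set.ncard_singleton]
  · simp [sig_ext, h01]
  · simp [sig_ext, h2]
  · simp [sig_ext, h01, h2]
  · simp
  · simp [h1]

private lemma degSet_cases (hk : 3 ≤ k) (v : Fin k ⊕ Σ _i : Fin k, Fin 2) :
    degSet (Gk k) v = 3 ∨ degSet (Gk k) v = 6 := by
  rcases v with j | ⟨i, a⟩
  · exact Or.inr (deg_l hk j)
  · exact Or.inl (deg_r hk i a)

private lemma maxDeg_6 (hk : 3 ≤ k) : maxDeg (Gk k) = 6 := by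
  have hne : {d : ℕ | ∃ v, degSet (Gk k) v = d}.Nonempty := ⟨6, inl 0, deg_l hk 0⟩
  have hbdd : ∀ d ∈ {d : ℕ | ∃ v, degSet (Gk k) v = d}, d ≤ 6 := by
    rintro d ⟨v, rfl⟩
    rcases degSet_cases hk v with h | h <;> omega
  refine le_antisymm (csSup_le hne hbdd) ?_
  exact le_csSup ⟨6, fun d hd => hbdd d hd⟩ ⟨inl 0, deg_l hk 0⟩

private lemma minDeg_3 (hk : 3 ≤ k) : minDeg (Gk k) = 3 := by
  have hlb : ∀ d ∈ {d : ℕ | ∃ v, degSet (Gk k) v = d}, 3 ≤ d := by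
    rintro d ⟨v, rfl⟩
    rcases degSet_cases hk v with h | h <;> omega
  refine le_antisymm (Nat.sInf_le ⟨inr ⟨0, 0⟩, deg_r hk 0 0⟩) ?_
  exact le_csInf ⟨3, inr ⟨0, 0⟩, deg_r hk 0 0⟩ hlb

end Stmt18Proof3
section Stmt18Proof4

open Sum Function

private inductive ForcedIn {V : Type*} (G : SimpleGraph V) (B : Set V) : ℕ → V → Prop
  | init : ∀ (n : ℕ) (v : V), v ∈ B → ForcedIn G B n v
  | force : ∀ (n : ℕ) (u w : V), ForcedIn G B n u → G.Adj u w →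
      (∀ x : V, G.Adj u x → x ≠ w → ForcedIn G B n x) → ForcedIn G B (n + 1) w

private lemma forcedIn_mono {V : Type*} {G : SimpleGraph V} {B : Set V} {n : ℕ} {v : V}
    (h : ForcedIn G B n v) : ∀ {m : ℕ}, n ≤ m → ForcedIn G B m v := by
  induction h with
  | init n v hv => exact fun {m} _ => .init m v hv
  | force n u w h1 hadj h2 ih1 ih2 =>
      intro m hm
      obtain ⟨m', rfl⟩ : ∃ m', m = m' + 1 := ⟨m - 1, by omega⟩
      exact .force m' u w (ih1 (by omega)) hadj fun x hx hne => ih2 x hx hne (by omega)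

private lemma forced_exists {V : Type*} [Fintype V] {G : SimpleGraph V} {B : Set V} {v : V}
    (h : Forced G B v) : ∃ n, ForcedIn G B n v := by
  induction h with
  | init v hv => exact ⟨0, .init 0 v hv⟩
  | force u w h1 hadj h2 ih1 ih2 =>
      classical
      refine ⟨(Finset.univ.sup fun y : V => sInf {n | ForcedIn G B n y}) + 1,
        .force _ u w ?_ hadj ?_⟩
      · obtain ⟨n, hn⟩ := ih1
        have h' : ForcedIn G B (sInf {n | ForcedIn G B n u}) u :=
          Nat.sInf_mem (⟨n, hn⟩ : {n | ForcedIn G B n u}.Nonempty)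
        exact forcedIn_mono h'
          (Finset.le_sup (f := fun y : V => sInf {n | ForcedIn G B n y}) (Finset.mem_univ u))
      · intro x hx hne
        obtain ⟨n, hn⟩ := ih2 x hx hne
        have h' : ForcedIn G B (sInf {n | ForcedIn G B n x}) x :=
          Nat.sInf_mem (⟨n, hn⟩ : {n | ForcedIn G B n x}.Nonempty)
        exact forcedIn_mono h'
          (Finset.le_sup (f := fun y : V => sInf {n | ForcedIn G B n y}) (Finset.mem_univ x))

private lemma forcedIn_inv {V : Type*} {G : SimpleGraph V} {B : Set V} {n : ℕ} {v : V}
    (h : ForcedIn G B n v) :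
    v ∈ B ∨ ∃ m u, n = m + 1 ∧ ForcedIn G B m u ∧ G.Adj u v ∧
      ∀ x, G.Adj u x → x ≠ v → ForcedIn G B m x := by
  cases h with
  | init _ _ hv => exact Or.inl hv
  | force m u w h1 hadj h2 => exact Or.inr ⟨m, u, rfl, h1, hadj, h2⟩

/-- The forcing time of a vertex. -/
private noncomputable def ft {V : Type*} (G : SimpleGraph V) (B : Set V) (v : V) : ℕ :=
  sInf {n | ForcedIn G B n v}

private lemma ft_step {V : Type*} [Fintype V] {G : SimpleGraph V} {B : Set V}
    (hB : IsZFS G B) {v : V} (hv : v ∉ B) :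
    ∃ u, G.Adj u v ∧ ft G B u < ft G B v ∧
      ∀ x, G.Adj u x → x ≠ v → ft G B x < ft G B v := by
  have hne : {n | ForcedIn G B n v}.Nonempty := forced_exists (hB v)
  have hmem : ForcedIn G B (ft G B v) v := Nat.sInf_mem hne
  rcases forcedIn_inv hmem with h | ⟨m, u, hm, h1, hadj, h2⟩
  · exact absurd h hv
  · have hum : ft G B u ≤ m := Nat.sInf_le h1
    refine ⟨u, hadj, by omega, fun x hx hxe => ?_⟩
    have : ft G B x ≤ m := Nat.sInf_le (h2 x hx hxe)
    omega

end Stmt18Proof4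
section Stmt18Proof5

open Sum Function

variable {k : ℕ} [NeZero k] {B : Set (Fin k ⊕ Σ _i : Fin k, Fin 2)}

private lemma white_pair_aux (hk : 3 ≤ k) (hB : IsZFS (Gk k) B) {i : Fin k} {a b : Fin 2}
    (ha : inr ⟨i, a⟩ ∉ B) (hab : a ≠ b)
    (hle : ft (Gk k) B (inr ⟨i, a⟩) ≤ ft (Gk k) B (inr ⟨i, b⟩)) : False := by
  obtain ⟨u, hadj, hu, hall⟩ := ft_step hB ha
  rcases u with m | ⟨i', c⟩
  · have hm := (adj_lr hk).mp hadj
    have hb' : ft (Gk k) B (inr ⟨i, b⟩) < ft (Gk k) B (inr ⟨i, a⟩) := by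
      refine hall _ ((adj_lr hk).mpr hm) fun h => hab ?_
      exact ((sig_ext.mp (inr_injective h)).2).symm
    omega
  · obtain ⟨hne, h1⟩ := adj_rr.mp hadj
    rcases fin2_cases a with rfl | rfl <;> rcases fin2_cases b with rfl | rfl <;>
        rcases fin2_cases c with rfl | rfl <;> simp_all
    · -- a = 0, b = 1, c = 1 : u = inr ⟨i, 1⟩ = inr ⟨i, b⟩
      subst h1; omega
    · subst h1; omega

private lemma white_pair (hk : 3 ≤ k) (hB : IsZFS (Gk k) B) {i : Fin k} {a b : Fin 2}
    (ha : inr ⟨i, a⟩ ∉ B) (hb : inr ⟨i, b⟩ ∉ B) (hab : a ≠ b) : False := by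
  rcases le_total (ft (Gk k) B (inr ⟨i, a⟩)) (ft (Gk k) B (inr ⟨i, b⟩)) with h | h
  · exact white_pair_aux hk hB ha hab h
  · exact white_pair_aux hk hB hb hab.symm h

private lemma white_pair_cycle (hk : 3 ≤ k) (hB : IsZFS (Gk k) B) {i : Fin k} {a : Fin 2}
    (ha : inr ⟨i, a⟩ ∉ B) :
    ft (Gk k) B (inl i) < ft (Gk k) B (inr ⟨i, a⟩) ∧
    ft (Gk k) B (inl (i + 1)) < ft (Gk k) B (inr ⟨i, a⟩) := by
  obtain ⟨u, hadj, hu, hall⟩ := ft_step hB ha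
  rcases u with m | ⟨i', c⟩
  · rcases (adj_lr hk).mp hadj with rfl | rfl
    · exact ⟨hu, hall _ ((adj_ll hk).mpr (Or.inl rfl)) inl_ne_inr⟩
    · exact ⟨hall _ ((adj_ll hk).mpr (Or.inr rfl)) inl_ne_inr, hu⟩
  · obtain ⟨hne, h1⟩ := adj_rr.mp hadj
    dsimp only at h1
    subst h1
    exact ⟨hall _ ((adj_rl hk).mpr (Or.inl rfl)) inl_ne_inr,
      hall _ ((adj_rl hk).mpr (Or.inr rfl)) inl_ne_inr⟩

private lemma white_cycle (hk : 3 ≤ k) (hB : IsZFS (Gk k) B) {j : Fin k}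
    (hj : inl j ∉ B) :
    ∃ i : Fin k,
      ((j = i ∧ ft (Gk k) B (inl (i + 1)) < ft (Gk k) B (inl j)) ∨
        (j = i + 1 ∧ ft (Gk k) B (inl i) < ft (Gk k) B (inl j))) ∧
      ft (Gk k) B (inr ⟨i, 0⟩) < ft (Gk k) B (inl j) ∧
      ft (Gk k) B (inr ⟨i, 1⟩) < ft (Gk k) B (inl j) := by
  obtain ⟨u, hadj, hu, hall⟩ := ft_step hB hj
  rcases u with m | ⟨i, c⟩
  · rcases (adj_ll hk).mp hadj with hjm | hmj
    · -- j = m + 1, u = inl m plays v_{j-1}, side pair m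
      refine ⟨m, Or.inr ⟨hjm, hu⟩, ?_, ?_⟩
      · exact hall _ ((adj_lr hk).mpr (Or.inl rfl)) (Ne.symm inl_ne_inr)
      · exact hall _ ((adj_lr hk).mpr (Or.inl rfl)) (Ne.symm inl_ne_inr)
    · -- m = j + 1, u = inl (j+1), side pair j
      subst hmj
      refine ⟨j, Or.inl ⟨rfl, hu⟩, ?_, ?_⟩
      · exact hall _ ((adj_lr hk).mpr (Or.inr rfl)) (Ne.symm inl_ne_inr)
      · exact hall _ ((adj_lr hk).mpr (Or.inr rfl)) (Ne.symm inl_ne_inr)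
  · have hpair : ∀ b : Fin 2, ft (Gk k) B (inr ⟨i, b⟩) < ft (Gk k) B (inl j) := by
      intro b
      rcases eq_or_ne b c with rfl | hbc
      · exact hu
      · refine hall _ (adj_rr.mpr ⟨fun h => hbc ?_, rfl⟩) (Ne.symm inl_ne_inr)
        exact ((sig_ext.mp h).2).symm
    rcases (adj_rl hk).mp hadj with rfl | hji
    · -- j = i
      refine ⟨j, Or.inl ⟨rfl, ?_⟩, hpair 0, hpair 1⟩
      exact hall _ ((adj_rl hk).mpr (Or.inr rfl)) fun h => add_one_ne hk j (inl_injective h)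
    · -- j = i + 1
      refine ⟨i, Or.inr ⟨hji, ?_⟩, hpair 0, hpair 1⟩
      refine hall _ ((adj_rl hk).mpr (Or.inl rfl)) fun h => ?_
      rw [hji] at h
      exact add_one_ne hk i (inl_injective h).symm

end Stmt18Proof5
section Stmt18Proof6

open Sum Function

variable {k : ℕ} [NeZero k]

private lemma card_V (k : ℕ) : Fintype.card (Fin k ⊕ Σ _i : Fin k, Fin 2) = 3 * k := by
  rw [Fintype.card_sum, Fintype.card_sigma]
  simp only [Fintype.card_fin, Finset.sum_const, Finset.card_univ, smul_eq_mul]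
  omega

private lemma card_lower (hk : 3 ≤ k) {S : Set (Fin k ⊕ Σ _i : Fin k, Fin 2)}
    (φ : (Fin k ⊕ Σ _i : Fin k, Fin 2) → Fin k)
    (hφ : Set.InjOn φ Sᶜ) : 2 * k ≤ S.ncard := by
  have h1 : (Sᶜ).ncard ≤ k := by
    have h := Set.ncard_le_ncard_of_injOn φ (fun a _ => Set.mem_univ (φ a)) hφ Set.finite_univ
    rwa [Set.ncard_univ, Nat.card_eq_fintype_card, Fintype.card_fin] at h
  have h2 : S.ncard + (Sᶜ).ncard = 3 * k := by
    rw [Set.ncard_add_ncard_compl, Nat.card_eq_fintype_card, card_V]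
  omega

private def B0 (k : ℕ) : Set (Fin k ⊕ Σ _i : Fin k, Fin 2) :=
  Set.range (Sum.elim inl fun i : Fin k => inr ⟨i, (0 : Fin 2)⟩)

private lemma mem_B0_l (j : Fin k) : inl j ∈ B0 k := ⟨inl j, rfl⟩

private lemma mem_B0_r (i : Fin k) : (inr ⟨i, 0⟩ : Fin k ⊕ Σ _i : Fin k, Fin 2) ∈ B0 k :=
  ⟨inr i, rfl⟩

private lemma ncard_B0 : (B0 k).ncard = 2 * k := by
  have hinj : Injective (Sum.elim (inl : Fin k → Fin k ⊕ Σ _i : Fin k, Fin 2)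
      fun i : Fin k => inr ⟨i, (0 : Fin 2)⟩) := by
    rintro (a | a) (b | b) h <;> simp_all [sig_ext]
  rw [B0, ← Set.image_univ, Set.ncard_image_of_injective _ hinj, Set.ncard_univ]
  rw [Nat.card_eq_fintype_card, Fintype.card_sum, Fintype.card_fin]
  omega

private lemma isZFS_B0 (hk : 3 ≤ k) : IsZFS (Gk k) (B0 k) := by
  intro v
  rcases v with j | ⟨i, a⟩
  · exact Forced.init _ (mem_B0_l j)
  · rcases fin2_cases a with rfl | rfl
    · exact Forced.init _ (mem_B0_r i)
    · refine Forced.force (inr ⟨i, 0⟩) (inr ⟨i, 1⟩) (Forced.init _ (mem_B0_r i))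
        (adj_rr.mpr ⟨fun h => ?_, rfl⟩) ?_
      · exact (by decide : (0 : Fin 2) ≠ 1) (sig_ext.mp h).2
      · intro x hx hne
        rcases x with m | ⟨i', c⟩
        · exact Forced.init _ (mem_B0_l m)
        · obtain ⟨hne', h1⟩ := adj_rr.mp hx
          dsimp only at h1
          subst h1
          rcases fin2_cases c with rfl | rfl
          · exact absurd rfl hne'
          · exact absurd rfl hne

private lemma isVC_B0 : IsVC (Gk k) (B0 k) := by
  intro u w hadj
  rcases u with j | ⟨i, a⟩
  · exact Or.inl (mem_B0_l j)
  · rcases w with j' | ⟨i', a'⟩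
    · exact Or.inr (mem_B0_l j')
    · obtain ⟨hne, h1⟩ := adj_rr.mp hadj
      dsimp only at h1
      subst h1
      rcases fin2_cases a with rfl | rfl
      · exact Or.inl (mem_B0_r i)
      · rcases fin2_cases a' with rfl | rfl
        · exact Or.inr (mem_B0_r i)
        · exact absurd rfl hne

private lemma zfs_lower (hk : 3 ≤ k) {B : Set (Fin k ⊕ Σ _i : Fin k, Fin 2)}
    (hB : IsZFS (Gk k) B) : 2 * k ≤ B.ncard := by
  classical
  apply card_lower hk (fun v =>
    match v with
    | inl j => if h : inl j ∈ B then 0 else (white_cycle hk hB h).choose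
    | inr s => s.1)
  rintro v hv w hw hvw
  rcases v with j | ⟨i, a⟩ <;> rcases w with j' | ⟨i', a'⟩ <;> dsimp only at hvw
  · -- cycle / cycle
    have hvB : inl j ∉ B := hv
    have hwB : inl j' ∉ B := hw
    rw [dif_neg hvB, dif_neg hwB] at hvw
    have hsj := (white_cycle hk hB hvB).choose_spec
    have hsj' := (white_cycle hk hB hwB).choose_spec
    generalize hcv : (white_cycle hk hB hvB).choose = cv at hvw hsj
    generalize hcw : (white_cycle hk hB hwB).choose = cw at hvw hsj'
    subst hvw
    rcases hsj with ⟨⟨hj1, hj2⟩ | ⟨hj1, hj2⟩, -, -⟩ <;>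
      rcases hsj' with ⟨⟨hw1, hw2⟩ | ⟨hw1, hw2⟩, -, -⟩ <;> subst hj1 <;> subst hw1
    · rfl
    · omega
    · omega
    · rfl
  · -- cycle / pair
    exfalso
    have hvB : inl j ∉ B := hv
    have hwB : (inr ⟨i', a'⟩ : Fin k ⊕ Σ _i : Fin k, Fin 2) ∉ B := hw
    rw [dif_neg hvB] at hvw
    have hsj := (white_cycle hk hB hvB).choose_spec
    generalize hcv : (white_cycle hk hB hvB).choose = cv at hvw hsj
    subst hvw
    have hp := white_pair_cycle hk hB hwB
    rcases hsj with ⟨hd, hp0, hp1⟩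
    have hpa : ft (Gk k) B (inr ⟨cv, a'⟩) < ft (Gk k) B (inl j) := by
      rcases fin2_cases a' with rfl | rfl
      exacts [hp0, hp1]
    rcases hd with ⟨hj1, -⟩ | ⟨hj1, -⟩ <;> subst hj1
    · have := hp.1; omega
    · have := hp.2; omega
  · -- pair / cycle
    exfalso
    have hvB : (inr ⟨i, a⟩ : Fin k ⊕ Σ _i : Fin k, Fin 2) ∉ B := hv
    have hwB : inl j' ∉ B := hw
    rw [dif_neg hwB] at hvw
    have hsj := (white_cycle hk hB hwB).choose_spec
    generalize hcw : (white_cycle hk hB hwB).choose = cw at hvw hsj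
    subst hvw
    have hp := white_pair_cycle hk hB hvB
    rcases hsj with ⟨hd, hp0, hp1⟩
    have hpa : ft (Gk k) B (inr ⟨i, a⟩) < ft (Gk k) B (inl j') := by
      rcases fin2_cases a with rfl | rfl
      exacts [hp0, hp1]
    rcases hd with ⟨hj1, -⟩ | ⟨hj1, -⟩ <;> subst hj1
    · have := hp.1; omega
    · have := hp.2; omega
  · -- pair / pair
    have hvB : (inr ⟨i, a⟩ : Fin k ⊕ Σ _i : Fin k, Fin 2) ∉ B := hv
    have hwB : (inr ⟨i', a'⟩ : Fin k ⊕ Σ _i : Fin k, Fin 2) ∉ B := hw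
    subst hvw
    rcases eq_or_ne a a' with rfl | hne
    · rfl
    · exact absurd (white_pair hk hB hvB hwB hne) (by simp)

private lemma vc_lower (hk : 3 ≤ k) {C : Set (Fin k ⊕ Σ _i : Fin k, Fin 2)}
    (hC : IsVC (Gk k) C) : 2 * k ≤ C.ncard := by
  apply card_lower hk (Sum.elim id Sigma.fst)
  rintro v hv w hw hvw
  rcases v with j | ⟨i, a⟩ <;> rcases w with j' | ⟨i', a'⟩ <;>
    simp only [Sum.elim_inl, Sum.elim_inr, id_eq] at hvw
  · rw [hvw]
  · rcases hC ((adj_lr hk).mpr (Or.inl hvw)) with h | h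
    · exact absurd h hv
    · exact absurd h hw
  · rcases hC ((adj_rl hk).mpr (Or.inl hvw.symm)) with h | h
    · exact absurd h hv
    · exact absurd h hw
  · subst hvw
    rcases eq_or_ne a a' with rfl | hne
    · rfl
    · have hadj : (Gk k).Adj (inr ⟨i, a⟩) (inr ⟨i, a'⟩) :=
        adj_rr.mpr ⟨fun h => hne (sig_ext.mp h).2, rfl⟩
      rcases hC hadj with h | h
      · exact absurd h hv
      · exact absurd h hw

end Stmt18Proof6

/-- For `k ≥ 3`, the graph obtained from a cycle `C_k` by attaching a copy
of `K_2` joined to each pair of consecutive cycle vertices has `n = 3k` vertices,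
`Δ = 6`, `δ = 3`, and satisfies `Z(G) = β(G) = 2k < (12k - 1)/5 = ((Δ-2)n - (Δ-δ) + 2)/(Δ-1)`. -/
theorem stmt18 (k : ℕ) (hk : 3 ≤ k) :
    Fintype.card (Fin k ⊕ Σ _i : Fin k, Fin 2) = 3 * k ∧
    maxDeg (cycleCliques k fun _ => 2) = 6 ∧
    minDeg (cycleCliques k fun _ => 2) = 3 ∧
    zfNum (cycleCliques k fun _ => 2) = 2 * k ∧
    vcNum (cycleCliques k fun _ => 2) = 2 * k ∧
    (2 * (k : ℚ) < (12 * (k : ℚ) - 1) / 5) := by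
  haveI : NeZero k := ⟨by omega⟩
  refine ⟨card_V k, maxDeg_6 hk, minDeg_3 hk, ?_, ?_, ?_⟩
  · refine le_antisymm (Nat.sInf_le ⟨B0 k, isZFS_B0 hk, ncard_B0⟩) ?_
    refine le_csInf ⟨2 * k, B0 k, isZFS_B0 hk, ncard_B0⟩ ?_
    rintro m ⟨B, hB, rfl⟩
    exact zfs_lower hk hB
  · refine le_antisymm (Nat.sInf_le ⟨B0 k, isVC_B0, ncard_B0⟩) ?_
    refine le_csInf ⟨2 * k, B0 k, isVC_B0, ncard_B0⟩ ?_
    rintro m ⟨C, hC, rfl⟩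
    exact vc_lower hk hC
  · have hk' : (3 : ℚ) ≤ (k : ℚ) := by exact_mod_cast hk
    rw [lt_div_iff₀ (by norm_num : (0 : ℚ) < 5)]
    linarith

end ZFPaper
end
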